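/- Let m : (a,b) → ℝ be C¹ with m' = F + c·m² where c : (a,b) → ℝ is continuous and positive, F is integrable on (a,b), and m has finite limits m(a⁺), m(b⁻) at both endpoints. Then c·m² is integrable on (a,b) and m(b⁻) − m(a⁺) ≥ ∫_a^b F, with equality if and only if m ≡ 0 on (a,b). -/
import Mathlib

open MeasureTheory Filter Topology

/-- If `m' = F + c m²` on `(a,b)` with `c` continuous positive, `F` integrable,
and `m` has finite one-sided limits `ma`, `mb` at the endpoints, then `c m²` is
integrable and `mb - ma ≥ ∫ F`, with equality iff `m ≡ 0`. -/
theorem stmt2 (a b : ℝ) (hab : a < b) (m F c : ℝ → ℝ)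
    (hderiv : ∀ r ∈ Set.Ioo a b, HasDerivAt m (F r + c r * m r ^ 2) r)
    (hccont : ContinuousOn c (Set.Ioo a b))
    (hcpos : ∀ r ∈ Set.Ioo a b, 0 < c r)
    (hFint : IntegrableOn F (Set.Ioo a b))
    (ma mb : ℝ)
    (hma : Tendsto m (nhdsWithin a (Set.Ioi a)) (nhds ma))
    (hmb : Tendsto m (nhdsWithin b (Set.Iio b)) (nhds mb)) :
    IntegrableOn (fun r => c r * m r ^ 2) (Set.Ioo a b) ∧
    mb - ma ≥ (∫ r in Set.Ioo a b, F r) ∧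
    (mb - ma = (∫ r in Set.Ioo a b, F r) ↔ ∀ r ∈ Set.Ioo a b, m r = 0) := by
  set g : ℝ → ℝ := fun r => c r * m r ^ 2 with hg
  set e : ℕ → ℝ := fun n => (b - a) / (n + 2) with he
  set A : ℕ → ℝ := fun n => a + e n with hA
  set B : ℕ → ℝ := fun n => b - e n with hB
  have hepos : ∀ n, 0 < e n := fun n => div_pos (by linarith) (by positivity)
  have hele : ∀ n, e n ≤ (b - a) / 2 := by
    intro n
    apply div_le_div_of_nonneg_left (by linarith) (by norm_num)
    · linarith [Nat.cast_nonneg (α := ℝ) n]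
  have hAB : ∀ n, A n ≤ B n := fun n => by
    have h1 := hele n; simp only [hA, hB]; linarith
  have hsub : ∀ n, Set.Icc (A n) (B n) ⊆ Set.Ioo a b := by
    intro n x hx
    have h1 := hepos n
    exact ⟨lt_of_lt_of_le (by simp only [hA]; linarith) hx.1,
      lt_of_le_of_lt hx.2 (by simp only [hB]; linarith)⟩
  have hsub' : ∀ n, Set.Ioc (A n) (B n) ⊆ Set.Ioo a b :=
    fun n => Set.Ioc_subset_Icc_self.trans (hsub n)
  have he0 : Tendsto e atTop (𝓝 0) := by
    rw [he]
    exact Tendsto.div_atTop tendsto_const_nhds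
      (tendsto_atTop_add_const_right atTop 2 tendsto_natCast_atTop_atTop)
  have hAt : Tendsto A atTop (𝓝 a) := by
    simpa using tendsto_const_nhds.add he0
  have hBt : Tendsto B atTop (𝓝 b) := by
    simpa using tendsto_const_nhds.sub he0
  have hmA : Tendsto (fun n => m (A n)) atTop (𝓝 ma) :=
    hma.comp (tendsto_nhdsWithin_iff.mpr ⟨hAt, Eventually.of_forall fun n => by
      simp only [hA, Set.mem_Ioi]; linarith [hepos n]⟩)
  have hmB : Tendsto (fun n => m (B n)) atTop (𝓝 mb) :=
    hmb.comp (tendsto_nhdsWithin_iff.mpr ⟨hBt, Eventually.of_forall fun n => by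
      simp only [hB, Set.mem_Iio]; linarith [hepos n]⟩)
  have hmcont : ContinuousOn m (Set.Ioo a b) :=
    fun r hr => (hderiv r hr).continuousAt.continuousWithinAt
  have hgcont : ContinuousOn g (Set.Ioo a b) := hccont.mul (hmcont.pow 2)
  have hgnn : ∀ x ∈ Set.Ioo a b, 0 ≤ g x :=
    fun x hx => mul_nonneg (hcpos x hx).le (sq_nonneg _)
  have hgint : ∀ n, IntegrableOn g (Set.Ioc (A n) (B n)) :=
    fun n => (((hgcont.mono (hsub n)).integrableOn_compact isCompact_Icc).mono_set
      Set.Ioc_subset_Icc_self)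
  have hcover : AECover (volume.restrict (Set.Ioo a b)) atTop
      (fun n => Set.Ioc (A n) (B n)) := aecover_Ioo_of_Ioc hAt hBt
  -- FTC on each interval
  have hFTC : ∀ n, ∫ x in Set.Ioc (A n) (B n), g x
      = (m (B n) - m (A n)) - ∫ x in Set.Ioc (A n) (B n), F x := by
    intro n
    have huIcc : Set.uIcc (A n) (B n) ⊆ Set.Ioo a b := by
      rw [Set.uIcc_of_le (hAB n)]; exact hsub n
    have hFi : IntervalIntegrable F volume (A n) (B n) :=
      (hFint.mono_set huIcc).intervalIntegrable
    have hgi : IntervalIntegrable g volume (A n) (B n) :=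
      (hgcont.mono huIcc).intervalIntegrable
    have h1 : ∫ x in (A n)..(B n), (F x + g x) = m (B n) - m (A n) :=
      intervalIntegral.integral_eq_sub_of_hasDerivAt
        (fun x hx => hderiv x (huIcc hx)) (hFi.add hgi)
    rw [intervalIntegral.integral_add hFi hgi] at h1
    simp only [intervalIntegral.integral_of_le (hAB n)] at h1
    linarith
  -- rewriting integrals over restricted measure
  have heqF : ∀ n, ∫ x in Set.Ioc (A n) (B n), F x ∂(volume.restrict (Set.Ioo a b))
      = ∫ x in Set.Ioc (A n) (B n), F x := by
    intro n
    rw [Measure.restrict_restrict measurableSet_Ioc,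
      Set.inter_eq_self_of_subset_left (hsub' n)]
  have heqg : ∀ n, ∫ x in Set.Ioc (A n) (B n), g x ∂(volume.restrict (Set.Ioo a b))
      = ∫ x in Set.Ioc (A n) (B n), g x := by
    intro n
    rw [Measure.restrict_restrict measurableSet_Ioc,
      Set.inter_eq_self_of_subset_left (hsub' n)]
  have hFtend : Tendsto (fun n => ∫ x in Set.Ioc (A n) (B n), F x) atTop
      (𝓝 (∫ x in Set.Ioo a b, F x)) := by
    have h2 := hcover.integral_tendsto_of_countably_generated hFint
    simpa only [heqF] using h2
  have hgtend : Tendsto (fun n => ∫ x in Set.Ioc (A n) (B n), g x) atTop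
      (𝓝 (mb - ma - ∫ x in Set.Ioo a b, F x)) := by
    have h2 := (hmB.sub hmA).sub hFtend
    exact h2.congr fun n => (hFTC n).symm
  have hgnn_ae : 0 ≤ᵐ[volume.restrict (Set.Ioo a b)] g :=
    (ae_restrict_iff' measurableSet_Ioo).mpr (ae_of_all _ hgnn)
  have hgInt : IntegrableOn g (Set.Ioo a b) := by
    apply hcover.integrable_of_integral_tendsto_of_nonneg_ae
      (mb - ma - ∫ x in Set.Ioo a b, F x)
      (fun n => ?_) hgnn_ae (by simpa only [heqg] using hgtend)
    rw [IntegrableOn, Measure.restrict_restrict measurableSet_Ioc,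
      Set.inter_eq_self_of_subset_left (hsub' n)]
    exact hgint n
  have hval : ∫ x in Set.Ioo a b, g x = mb - ma - ∫ x in Set.Ioo a b, F x := by
    have h2 := hcover.integral_tendsto_of_countably_generated hgInt
    simp only [heqg] at h2
    exact tendsto_nhds_unique h2 hgtend
  have hint_nn : 0 ≤ ∫ x in Set.Ioo a b, g x :=
    setIntegral_nonneg measurableSet_Ioo hgnn
  refine ⟨hgInt, by linarith, ?_, ?_⟩
  · intro heqv r hr
    by_contra hm
    have hgr : 0 < g r := mul_pos (hcpos r hr) ((sq_nonneg _).lt_of_ne (Ne.symm (pow_ne_zero 2 hm)))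
    have hzero : ∫ x in Set.Ioo a b, g x = 0 := by linarith
    have hev : ∀ᶠ x in 𝓝 r, 0 < g x :=
      (hgcont.continuousAt (isOpen_Ioo.mem_nhds hr)).eventually (eventually_gt_nhds hgr)
    obtain ⟨U, hU, hUopen, hrU⟩ := eventually_nhds_iff.mp hev
    have hpos : 0 < ∫ x in Set.Ioo a b, g x := by
      rw [setIntegral_pos_iff_support_of_nonneg_ae hgnn_ae hgInt]
      refine lt_of_lt_of_le ((hUopen.inter isOpen_Ioo).measure_pos volume ⟨r, hrU, hr⟩)
        (measure_mono fun x hx => ⟨ne_of_gt (hU x hx.1), hx.2⟩)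
    linarith
  · intro hz
    have : ∫ x in Set.Ioo a b, g x = 0 := by
      have hEq : Set.EqOn g (fun _ => (0:ℝ)) (Set.Ioo a b) := fun x hx => by
        simp [hg, hz x hx]
      rw [setIntegral_congr_fun measurableSet_Ioo hEq, integral_zero]
    linarith
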